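/- arXiv:0912.1443 — 3 statements merged into one kernel-verified Lean document; each statement's English description precedes it below -/
import Mathlib

section
/- Let k ∈ ℝ and y ∈ ℝ³, and let Φ(x) = exp(i·k·‖x − y‖)/(4π·‖x − y‖) for x ≠ y. Then Φ satisfies the Sommerfeld radiation condition with rate O(1/‖x‖): there exists a constant C > 0 such that for all x ∈ ℝ³ with ‖x‖ ≥ ‖y‖ + 1 one has ‖x‖ · |(fderiv Φ x)(‖x‖⁻¹ • x) − i·k·Φ(x)| ≤ C/‖x‖. -/
open Complex Filter

noncomputable section

private lemma myNormDeriv (y x : EuclideanSpace ℝ (Fin 3)) (h : x ≠ y) :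
    HasFDerivAt (fun z : EuclideanSpace ℝ (Fin 3) => ‖z - y‖)
      (‖x - y‖⁻¹ • innerSL ℝ (x - y)) x := by
  have hne : x - y ≠ 0 := sub_ne_zero.2 h
  have h1 : HasFDerivAt (fun z : EuclideanSpace ℝ (Fin 3) => z - y)
      (ContinuousLinearMap.id ℝ (EuclideanSpace ℝ (Fin 3))) x := (hasFDerivAt_id x).sub_const y
  have h2 := h1.norm_sq
  have hq : ‖x - y‖ ^ 2 ≠ 0 := pow_ne_zero _ (norm_ne_zero_iff.2 hne)
  have h3 := h2.sqrt hq
  have heq : (fun z : EuclideanSpace ℝ (Fin 3) => Real.sqrt (‖z - y‖ ^ 2))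
      = fun z : EuclideanSpace ℝ (Fin 3) => ‖z - y‖ := by
    funext z; exact Real.sqrt_sq (norm_nonneg _)
  rw [heq] at h3
  refine h3.congr_fderiv ?_
  ext v
  have hr : (0:ℝ) < ‖x - y‖ := norm_pos_iff.2 hne
  simp [Real.sqrt_sq (norm_nonneg (x - y)), ContinuousLinearMap.smul_apply, smul_eq_mul]
  ring

private lemma myGDeriv (k r : ℝ) (hr : r ≠ 0) :
    HasDerivAt (fun s : ℝ => Complex.exp (Complex.I * k * s) / (4 * Real.pi * s))
      ((Complex.I * k * Complex.exp (Complex.I * k * r) * (4 * Real.pi * r)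
        - Complex.exp (Complex.I * k * r) * (4 * Real.pi)) / (4 * Real.pi * r) ^ 2) r := by
  have h0 : HasDerivAt (fun s : ℝ => (s : ℂ)) 1 r := by
    simpa using (hasDerivAt_id r).ofReal_comp
  have hnum : HasDerivAt (fun s : ℝ => Complex.exp (Complex.I * k * s))
      (Complex.exp (Complex.I * k * r) * (Complex.I * k)) r := by
    have := ((h0.const_mul (Complex.I * k)).cexp)
    simpa using this
  have hden : HasDerivAt (fun s : ℝ => ((4 : ℂ) * Real.pi * s)) ((4 : ℂ) * Real.pi) r := by
    simpa using h0.const_mul ((4 : ℂ) * Real.pi)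
  have hd0 : ((4 : ℂ) * Real.pi * r) ≠ 0 := by
    simp [Real.pi_ne_zero, hr, Complex.ofReal_ne_zero]
  have := hnum.div hden hd0
  refine this.congr_deriv ?_
  ring

private lemma myFDeriv (k : ℝ) (y x : EuclideanSpace ℝ (Fin 3)) (h : x ≠ y)
    (Φ : EuclideanSpace ℝ (Fin 3) → ℂ)
    (hΦ : ∀ x, x ≠ y →
      Φ x = Complex.exp (Complex.I * k * ‖x - y‖) / (4 * Real.pi * ‖x - y‖))
    (v : EuclideanSpace ℝ (Fin 3)) :
    fderiv ℝ Φ x v = ((‖x - y‖⁻¹ * inner ℝ (x - y) v : ℝ) : ℂ) *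
      ((Complex.I * k * Complex.exp (Complex.I * k * ‖x - y‖) * (4 * Real.pi * ‖x - y‖)
        - Complex.exp (Complex.I * k * ‖x - y‖) * (4 * Real.pi)) / (4 * Real.pi * ‖x - y‖) ^ 2) := by
  have hr : ‖x - y‖ ≠ 0 := norm_ne_zero_iff.2 (sub_ne_zero.2 h)
  have hcomp := ((myGDeriv k ‖x - y‖ hr).hasFDerivAt).comp x (myNormDeriv y x h)
  have hev : Φ =ᶠ[nhds x] (fun z : EuclideanSpace ℝ (Fin 3) =>
      Complex.exp (Complex.I * k * ‖z - y‖) / (4 * Real.pi * ‖z - y‖)) := by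
    filter_upwards [IsOpen.mem_nhds isOpen_compl_singleton h] with z hz
    exact hΦ z hz
  have hΦd : HasFDerivAt Φ _ x := hcomp.congr_of_eventuallyEq hev
  rw [hΦd.fderiv]
  simp only [ContinuousLinearMap.comp_apply, ContinuousLinearMap.smulRight_apply,
    ContinuousLinearMap.one_apply, ContinuousLinearMap.smul_apply, innerSL_apply_apply,
    ContinuousLinearMap.toSpanSingleton_apply,
    smul_eq_mul, Complex.real_smul, Complex.ofReal_mul, Complex.ofReal_inv]

end

/-- The fundamental solution `Φ(x) = exp(i k ‖x-y‖)/(4π ‖x-y‖)` satisfies the Sommerfeld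
radiation condition with rate `O(1/‖x‖)`: there is `C > 0` such that for all `x` with
`‖x‖ ≥ ‖y‖ + 1` one has `‖x‖ · |∂Φ/∂r − i k Φ| ≤ C/‖x‖`, where `∂Φ/∂r` is the Fréchet
derivative of `Φ` at `x` in the radial direction `‖x‖⁻¹ • x`. -/
theorem fundamental_solution_radiation_condition (k : ℝ) (y : EuclideanSpace ℝ (Fin 3))
    (Φ : EuclideanSpace ℝ (Fin 3) → ℂ)
    (hΦ : ∀ x, x ≠ y →
      Φ x = Complex.exp (Complex.I * k * ‖x - y‖) / (4 * Real.pi * ‖x - y‖)) :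
    ∃ C : ℝ, 0 < C ∧ ∀ x : EuclideanSpace ℝ (Fin 3), ‖y‖ + 1 ≤ ‖x‖ →
      ‖x‖ * ‖fderiv ℝ Φ x ((‖x‖)⁻¹ • x) - Complex.I * k * Φ x‖ ≤ C / ‖x‖ := by
  have hπ : (0:ℝ) < Real.pi := Real.pi_pos
  refine ⟨(1 + ‖y‖)^2 * (2 * |k| * ‖y‖+1) / (4*Real.pi), by positivity, ?_⟩
  intro x hx
  have hxpos : (0:ℝ) < ‖x‖ := lt_of_lt_of_le (by positivity) hx
  have hxy : x ≠ y := by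
    intro he; rw [he] at hx; linarith
  set r : ℝ := ‖x - y‖ with hrdef
  have hr1 : (1:ℝ) ≤ r := by
    have := norm_sub_norm_le x y
    linarith
  have hrpos : (0:ℝ) < r := by linarith
  have hrne : r ≠ 0 := ne_of_gt hrpos
  have hxr : ‖x‖ ≤ r * (1 + ‖y‖) := by
    have h1 : ‖x‖ ≤ r + ‖y‖ := by
      calc ‖x‖ = ‖(x - y) + y‖ := by rw [sub_add_cancel]
        _ ≤ r + ‖y‖ := norm_add_le _ _
    nlinarith [norm_nonneg y]
  set v : EuclideanSpace ℝ (Fin 3) := (‖x‖)⁻¹ • x with hvdef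
  set s : ℝ := ‖x - y‖⁻¹ * inner ℝ (x - y) v with hsdef
  -- bounds on s
  have hs1 : |s| ≤ 1 := by
    have hv : ‖v‖ ≤ 1 := by
      rw [hvdef, norm_smul, norm_inv, norm_norm]
      rw [inv_mul_le_iff₀ hxpos]; simp
    have hinner : |(inner ℝ (x - y) v : ℝ)| ≤ r * 1 := by
      calc |(inner ℝ (x - y) v : ℝ)| ≤ ‖x - y‖ * ‖v‖ := abs_real_inner_le_norm _ _
        _ ≤ r * 1 := by apply mul_le_mul_of_nonneg_left hv (norm_nonneg _)
    rw [hsdef, abs_mul, abs_inv, abs_norm]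
    rw [inv_mul_le_iff₀ hrpos]
    simpa using hinner
  have hs2 : r * |s - 1| ≤ 2 * ‖y‖ := by
    have hinner : (inner ℝ (x - y) v : ℝ) = ‖x‖ - (inner ℝ y x : ℝ) / ‖x‖ := by
      rw [hvdef]
      rw [real_inner_smul_right, inner_sub_left, real_inner_self_eq_norm_sq]
      field_simp
    have hrs : r * (s - 1) = (‖x‖ - r) - (inner ℝ y x : ℝ) / ‖x‖ := by
      rw [hsdef, hinner]
      field_simp
      rw [hrdef]; field_simp [norm_ne_zero_iff.2 (sub_ne_zero.2 hxy)]; ring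
    have h1 : |‖x‖ - r| ≤ ‖y‖ := by
      have := abs_norm_sub_norm_le x (x - y)
      simpa using this
    have h2 : |(inner ℝ y x : ℝ) / ‖x‖| ≤ ‖y‖ := by
      rw [abs_div, abs_norm, div_le_iff₀ hxpos]
      exact abs_real_inner_le_norm y x
    calc r * |s - 1| = |r * (s - 1)| := by
          rw [abs_mul, abs_of_pos hrpos]
      _ = |(‖x‖ - r) - (inner ℝ y x : ℝ) / ‖x‖| := by rw [hrs]
      _ ≤ |‖x‖ - r| + |(inner ℝ y x : ℝ) / ‖x‖| := abs_sub _ _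
      _ ≤ 2 * ‖y‖ := by linarith
  -- rewrite the expression
  rw [myFDeriv k y x hxy Φ hΦ v, hΦ x hxy]
  rw [← hrdef]
  set e : ℂ := Complex.exp (Complex.I * k * r) with hedef
  have hπc : ((Real.pi : ℂ)) ≠ 0 := Complex.ofReal_ne_zero.2 (ne_of_gt hπ)
  have hrc : ((r : ℂ)) ≠ 0 := Complex.ofReal_ne_zero.2 hrne
  have key : ((s:ℝ):ℂ) * ((Complex.I * k * e * (4 * Real.pi * r)
        - e * (4 * Real.pi)) / (4 * Real.pi * r) ^ 2)
      - Complex.I * k * (e / (4 * Real.pi * r))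
      = e * (Complex.I * k * r * (((s:ℝ):ℂ) - 1) - ((s:ℝ):ℂ)) / (4 * Real.pi * r^2) := by
    field_simp
    ring
  rw [key]
  have he1 : ‖e‖ = 1 := by
    rw [hedef, Complex.norm_exp]
    simp [Complex.mul_re]
  have hnum : ‖Complex.I * k * r * (((s:ℝ):ℂ) - 1) - ((s:ℝ):ℂ)‖
      ≤ 2 * |k| * ‖y‖ + 1 := by
    have htri : ‖Complex.I * k * r * (((s:ℝ):ℂ) - 1) - ((s:ℝ):ℂ)‖
        ≤ ‖Complex.I * k * r * (((s:ℝ):ℂ) - 1)‖ + ‖((s:ℝ):ℂ)‖ := by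
      exact norm_sub_le _ _
    have h1 : ‖Complex.I * k * r * (((s:ℝ):ℂ) - 1)‖ = |k| * (r * |s - 1|) := by
      have : (((s:ℝ):ℂ) - 1) = (((s - 1 : ℝ)):ℂ) := by push_cast; ring
      rw [this]
      simp only [norm_mul, Complex.norm_I, Complex.norm_real, Real.norm_eq_abs, one_mul]
      rw [abs_of_pos hrpos]
      ring
    have h2 : ‖((s:ℝ):ℂ)‖ = |s| := by rw [Complex.norm_real, Real.norm_eq_abs]
    rw [h1, h2] at htri
    have : |k| * (r * |s - 1|) ≤ |k| * (2 * ‖y‖) :=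
      mul_le_mul_of_nonneg_left hs2 (abs_nonneg k)
    nlinarith
  have hden : ‖(4:ℂ) * Real.pi * (r:ℂ)^2‖ = 4 * Real.pi * r^2 := by
    simp [norm_mul, Complex.norm_real, abs_of_pos hπ, abs_of_pos hrpos, map_pow]
  have habs : ‖e * (Complex.I * k * r * (((s:ℝ):ℂ) - 1) - ((s:ℝ):ℂ))
        / (4 * Real.pi * (r:ℂ)^2)‖ ≤ (2 * |k| * ‖y‖ + 1) / (4 * Real.pi * r^2) := by
    rw [norm_div, norm_mul, he1, one_mul, hden]
    apply div_le_div_of_nonneg_right hnum (by positivity) |>.trans_eq rfl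
  have hfinal : ‖x‖ * ((2 * |k| * ‖y‖ + 1) / (4 * Real.pi * r^2))
      ≤ (1 + ‖y‖)^2 * (2 * |k| * ‖y‖+1) / (4*Real.pi) / ‖x‖ := by
    rw [div_div]
    rw [mul_div_assoc']
    rw [div_le_div_iff₀ (by positivity) (by positivity)]
    have hx2 : ‖x‖^2 ≤ (r * (1 + ‖y‖))^2 := by
      apply pow_le_pow_left₀ (norm_nonneg x) hxr
    nlinarith [mul_le_mul_of_nonneg_left hx2
      (show (0:ℝ) ≤ (2 * |k| * ‖y‖ + 1) * (4 * Real.pi) by positivity)]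
  calc ‖x‖ * ‖e * (Complex.I * k * r * (((s:ℝ):ℂ) - 1) - ((s:ℝ):ℂ))
        / (4 * Real.pi * (r:ℂ)^2)‖
      ≤ ‖x‖ * ((2 * |k| * ‖y‖ + 1) / (4 * Real.pi * r^2)) :=
        mul_le_mul_of_nonneg_left habs (le_of_lt hxpos)
    _ ≤ (1 + ‖y‖)^2 * (2 * |k| * ‖y‖+1) / (4*Real.pi) / ‖x‖ := hfinal
end

section
/- Let k ∈ ℝ, let K ⊆ ℝ³ be a compact set with μH²(K) < ∞, and let φ : ℝ³ → ℂ be a bounded measurable function. Then the single-layer potential u(x) = ∫_{y ∈ K} Φ_k(x,y) · φ(y) dμH²(y) satisfies: (a) there exist constants C > 0 and R > 0 such that |u(x)| ≤ C/‖x‖ for all ‖x‖ ≥ R, and (b) ‖x‖ · ((fderiv u x)(‖x‖⁻¹ • x) − i·k·u(x)) tends to 0 as ‖x‖ → ∞, i.e. u satisfies the Sommerfeld radiation condition with wave number k. -/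
open Complex MeasureTheory Filter Bornology
open scoped ENNReal

/-- The fundamental solution of the Helmholtz equation with wave number `k`. -/
noncomputable def Phi (k : ℝ) (x y : EuclideanSpace ℝ (Fin 3)) : ℂ :=
  Complex.exp (Complex.I * k * ‖x - y‖) / (4 * Real.pi * ‖x - y‖)

set_option maxHeartbeats 1000000
set_option synthInstance.maxHeartbeats 400000

noncomputable def phiD (k : ℝ) (x y : EuclideanSpace ℝ (Fin 3)) :
    EuclideanSpace ℝ (Fin 3) →L[ℝ] ℂ :=
  (Complex.exp (Complex.I * k * ‖x - y‖) * (Complex.I * k * ‖x - y‖ - 1) /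
      (4 * Real.pi * ‖x - y‖ ^ 2) * (‖x - y‖ : ℂ)⁻¹) •
    Complex.ofRealCLM.comp (innerSL ℝ (x - y))

lemma norm_exp_I_mul (k r : ℝ) : ‖Complex.exp (Complex.I * k * r)‖ = 1 := by
  rw [Complex.norm_exp]
  simp

lemma phiD_apply (k : ℝ) (x y v : EuclideanSpace ℝ (Fin 3)) :
    phiD k x y v = Complex.exp (Complex.I * k * ‖x - y‖) * (Complex.I * k * ‖x - y‖ - 1) /
      (4 * Real.pi * ‖x - y‖ ^ 2) * (‖x - y‖ : ℂ)⁻¹ * ((inner ℝ (x - y) v : ℝ) : ℂ) := by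
  simp only [phiD, ContinuousLinearMap.smul_apply, ContinuousLinearMap.coe_comp',
    Function.comp_apply, Complex.ofRealCLM_apply, innerSL_apply_apply, smul_eq_mul]

lemma norm_Phi (k : ℝ) (x y : EuclideanSpace ℝ (Fin 3)) :
    ‖Phi k x y‖ = 1 / (4 * Real.pi * ‖x - y‖) := by
  rw [Phi, norm_div, norm_exp_I_mul]
  congr 1
  have : ((4 : ℂ) * Real.pi * ‖x - y‖) = ((4 * Real.pi * ‖x - y‖ : ℝ) : ℂ) := by push_cast; ring
  rw [this, Complex.norm_real, Real.norm_of_nonneg (by positivity)]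

lemma norm_phiD_le (k : ℝ) {x y : EuclideanSpace ℝ (Fin 3)} (h : x ≠ y) :
    ‖phiD k x y‖ ≤ (|k| * ‖x - y‖ + 1) / (4 * Real.pi * ‖x - y‖ ^ 2) := by
  have hr : 0 < ‖x - y‖ := norm_sub_pos_iff.2 h
  apply ContinuousLinearMap.opNorm_le_bound _ (by positivity)
  intro v
  rw [phiD_apply]
  have h1 : ‖((inner ℝ (x - y) v : ℝ) : ℂ)‖ ≤ ‖x - y‖ * ‖v‖ := by
    rw [Complex.norm_real, Real.norm_eq_abs]
    exact abs_real_inner_le_norm _ _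
  have h2 : ‖Complex.exp (Complex.I * k * ‖x - y‖) * (Complex.I * k * ‖x - y‖ - 1) /
      (4 * Real.pi * ‖x - y‖ ^ 2) * ((‖x - y‖ : ℂ))⁻¹‖ ≤
      (|k| * ‖x - y‖ + 1) / (4 * Real.pi * ‖x - y‖ ^ 2) * (‖x - y‖)⁻¹ := by
    rw [norm_mul, norm_inv, norm_div, norm_mul, norm_exp_I_mul, one_mul, Complex.norm_real,
      Real.norm_of_nonneg (norm_nonneg _)]
    have hnum : ‖Complex.I * k * ‖x - y‖ - 1‖ ≤ |k| * ‖x - y‖ + 1 := by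
      refine (norm_sub_le _ _).trans ?_
      simp [norm_mul, Complex.norm_real]
    have hden : ‖((4 : ℂ) * Real.pi * (‖x - y‖ : ℂ) ^ 2)‖ = 4 * Real.pi * ‖x - y‖ ^ 2 := by
      have : ((4 : ℂ) * Real.pi * (‖x - y‖ : ℂ) ^ 2) = ((4 * Real.pi * ‖x - y‖ ^ 2 : ℝ) : ℂ) := by
        push_cast; ring
      rw [this, Complex.norm_real, Real.norm_of_nonneg (by positivity)]
    rw [hden]
    gcongr
  calc ‖Complex.exp (Complex.I * k * ‖x - y‖) * (Complex.I * k * ‖x - y‖ - 1) /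
      (4 * Real.pi * ‖x - y‖ ^ 2) * ((‖x - y‖ : ℂ))⁻¹ * ((inner ℝ (x - y) v : ℝ) : ℂ)‖
      ≤ (|k| * ‖x - y‖ + 1) / (4 * Real.pi * ‖x - y‖ ^ 2) * (‖x - y‖)⁻¹ * (‖x - y‖ * ‖v‖) := by
        rw [norm_mul]
        exact mul_le_mul h2 h1 (norm_nonneg _) (by positivity)
    _ = (|k| * ‖x - y‖ + 1) / (4 * Real.pi * ‖x - y‖ ^ 2) * ‖v‖ := by
        field_simp
    _ ≤ (|k| * ‖x - y‖ + 1) / (4 * Real.pi * ‖x - y‖ ^ 2) * ‖v‖ := le_rfl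

lemma meas_Phi_mul (k : ℝ) (x : EuclideanSpace ℝ (Fin 3)) (φ : EuclideanSpace ℝ (Fin 3) → ℂ)
    (hφm : Measurable φ) : Measurable (fun y => Phi k x y * φ y) := by
  apply Measurable.mul _ hφm
  unfold Phi
  apply Measurable.div
  · exact (Complex.continuous_exp.comp (by continuity)).measurable
  · exact (by continuity : Continuous fun y : EuclideanSpace ℝ (Fin 3) =>
      ((4 : ℂ) * Real.pi * ‖x - y‖)).measurable

lemma key_bound (k RK : ℝ) {x y : EuclideanSpace ℝ (Fin 3)}
    (hy : ‖y‖ ≤ RK) (hRK : 0 ≤ RK) (hx : 2 * RK + 2 ≤ ‖x‖) :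
    ‖phiD k x y ((‖x‖)⁻¹ • x) - Complex.I * k * Phi k x y‖ ≤
      (2 * |k| * RK + 1) / (Real.pi * ‖x‖ ^ 2) := by
  have hxpos : 0 < ‖x‖ := by linarith
  have hx0 : x ≠ 0 := by simpa using norm_pos_iff.1 hxpos
  have hrlb : ‖x‖ / 2 ≤ ‖x - y‖ := by
    have h1 : ‖x‖ - ‖y‖ ≤ ‖x - y‖ := norm_sub_norm_le x y
    linarith
  have hr : 0 < ‖x - y‖ := by linarith
  have hne : x ≠ y := by
    intro hxy; rw [hxy, sub_self, norm_zero] at hr; exact lt_irrefl 0 hr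
  set r := ‖x - y‖ with hrdef
  set a : ℝ := inner ℝ (x - y) ((‖x‖)⁻¹ • x) with hadef
  have hxhat : ‖(‖x‖)⁻¹ • x‖ = 1 := by
    rw [norm_smul, norm_inv, norm_norm]
    field_simp
  have ha_le : |a| ≤ r := by
    calc |a| ≤ ‖x - y‖ * ‖(‖x‖)⁻¹ • x‖ := abs_real_inner_le_norm _ _
      _ = r := by rw [hxhat, mul_one]
  have ha_eq : a = ‖x‖ - inner ℝ y ((‖x‖)⁻¹ • x) := by
    rw [hadef, inner_sub_left]
    congr 1
    rw [real_inner_smul_right, real_inner_self_eq_norm_sq]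
    field_simp
  have hinner_y : |(inner ℝ y ((‖x‖)⁻¹ • x) : ℝ)| ≤ ‖y‖ := by
    calc |(inner ℝ y ((‖x‖)⁻¹ • x) : ℝ)| ≤ ‖y‖ * ‖(‖x‖)⁻¹ • x‖ := abs_real_inner_le_norm _ _
      _ = ‖y‖ := by rw [hxhat, mul_one]
  have har : |a - r| ≤ 2 * RK := by
    have h1 : |‖x‖ - r| ≤ ‖y‖ := by
      rw [hrdef]; exact abs_norm_sub_norm_le x (x - y) |>.trans_eq (by simp) |>.trans (le_refl _)
    have h2 : |a - ‖x‖| ≤ ‖y‖ := by rw [ha_eq]; simpa using hinner_y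
    calc |a - r| = |(a - ‖x‖) + (‖x‖ - r)| := by ring_nf
      _ ≤ |a - ‖x‖| + |‖x‖ - r| := abs_add_le _ _
      _ ≤ ‖y‖ + ‖y‖ := add_le_add h2 h1
      _ ≤ 2 * RK := by linarith
  -- single fraction formula
  have hrC : (r : ℂ) ≠ 0 := by exact_mod_cast hr.ne'
  have hπ : (Real.pi : ℂ) ≠ 0 := by exact_mod_cast Real.pi_ne_zero
  have hform : phiD k x y ((‖x‖)⁻¹ • x) - Complex.I * k * Phi k x y =
      Complex.exp (Complex.I * k * r) * ((Complex.I * k * r) * ((a : ℂ) - r) - a) /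
        (4 * Real.pi * r ^ 3) := by
    have hdenne : ((4 : ℂ) * Real.pi * (r : ℂ) ^ 3) ≠ 0 := by
      simp [hπ, hrC]
    rw [phiD_apply, Phi, ← hadef, ← hrdef, eq_div_iff hdenne]
    field_simp
    ring
  rw [hform, norm_div, norm_mul, norm_exp_I_mul, one_mul]
  have hden : ‖((4 : ℂ) * Real.pi * (r : ℂ) ^ 3)‖ = 4 * Real.pi * r ^ 3 := by
    have : ((4 : ℂ) * Real.pi * (r : ℂ) ^ 3) = ((4 * Real.pi * r ^ 3 : ℝ) : ℂ) := by
      push_cast; ring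
    rw [this, Complex.norm_real, Real.norm_of_nonneg (by positivity)]
  rw [hden]
  have hnum : ‖(Complex.I * k * r) * ((a : ℂ) - r) - (a : ℂ)‖ ≤ |k| * r * (2 * RK) + r := by
    refine (norm_sub_le _ _).trans ?_
    have h1 : ‖(Complex.I * k * r) * ((a : ℂ) - r)‖ ≤ |k| * r * (2 * RK) := by
      rw [norm_mul]
      have e1 : ‖Complex.I * (k : ℂ) * (r : ℂ)‖ = |k| * r := by
        simp [norm_mul, Complex.norm_real, Real.norm_eq_abs, abs_of_pos hr]
      have e2 : ‖((a : ℂ) - r)‖ = |a - r| := by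
        rw [← Complex.ofReal_sub, Complex.norm_real, Real.norm_eq_abs]
      rw [e1, e2]
      exact mul_le_mul_of_nonneg_left har (by positivity)
    have h2 : ‖(a : ℂ)‖ ≤ r := by rw [Complex.norm_real, Real.norm_eq_abs]; exact ha_le
    exact add_le_add h1 h2
  calc ‖(Complex.I * k * r) * ((a : ℂ) - r) - (a : ℂ)‖ / (4 * Real.pi * r ^ 3)
      ≤ (|k| * r * (2 * RK) + r) / (4 * Real.pi * r ^ 3) := by gcongr
    _ = (2 * |k| * RK + 1) / (4 * Real.pi * r ^ 2) := by
        field_simp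
    _ ≤ (2 * |k| * RK + 1) / (Real.pi * ‖x‖ ^ 2) := by
        apply div_le_div_of_nonneg_left (by positivity) (by positivity)
        calc Real.pi * ‖x‖ ^ 2 = 4 * Real.pi * (‖x‖ / 2) ^ 2 := by ring
          _ ≤ 4 * Real.pi * r ^ 2 := by gcongr

lemma hasFDerivAt_Phi (k : ℝ) (y : EuclideanSpace ℝ (Fin 3)) {x : EuclideanSpace ℝ (Fin 3)}
    (h : x ≠ y) : HasFDerivAt (fun x => Phi k x y) (phiD k x y) x := by
  have hne0 : ‖x - y‖ ≠ 0 := norm_ne_zero_iff.2 (sub_ne_zero.2 h)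
  have hr : 0 < ‖x - y‖ := (norm_nonneg _).lt_of_ne' hne0
  have h1 : HasFDerivAt (fun x : EuclideanSpace ℝ (Fin 3) => ‖x - y‖)
      ((‖x - y‖)⁻¹ • innerSL ℝ (x - y)) x := by
    have hs : HasFDerivAt (fun x : EuclideanSpace ℝ (Fin 3) => ‖x - y‖ ^ 2)
        (2 • innerSL ℝ (x - y)) x := by
      simpa using ((hasFDerivAt_id x).sub_const y).norm_sq
    have hne : ‖x - y‖ ^ 2 ≠ 0 := pow_ne_zero _ hne0
    have h1 := hs.sqrt hne
    have heq : (fun z : EuclideanSpace ℝ (Fin 3) => Real.sqrt (‖z - y‖ ^ 2)) =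
        fun z => ‖z - y‖ := by
      funext z; exact Real.sqrt_sq (norm_nonneg _)
    rw [heq] at h1
    refine h1.congr_fderiv ?_
    rw [Real.sqrt_sq (norm_nonneg _)]
    ext v
    simp only [ContinuousLinearMap.smul_apply, smul_eq_mul]
    ring
  have h2 : HasDerivAt (fun r : ℝ => Complex.exp (Complex.I * k * r) / (4 * Real.pi * r))
      (Complex.exp (Complex.I * k * ‖x - y‖) * (Complex.I * k * ‖x - y‖ - 1) /
        (4 * Real.pi * ‖x - y‖ ^ 2)) ‖x - y‖ := by
    set r := ‖x - y‖
    have ha : HasDerivAt (fun r : ℝ => (r : ℂ)) 1 r := by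
      simpa using (hasDerivAt_id r).ofReal_comp
    have hb : HasDerivAt (fun r : ℝ => Complex.I * k * r) (Complex.I * k) r := by
      simpa using ha.const_mul (Complex.I * k)
    have hc := hb.cexp
    have hd : HasDerivAt (fun r : ℝ => ((4 : ℂ) * Real.pi * r)) ((4 : ℂ) * Real.pi) r := by
      simpa using ha.const_mul ((4 : ℂ) * Real.pi)
    have hπ : (Real.pi : ℂ) ≠ 0 := by exact_mod_cast Real.pi_ne_zero
    have hrC : (r : ℂ) ≠ 0 := by exact_mod_cast hne0
    have hdne : ((4 : ℂ) * Real.pi * r) ≠ 0 := by simp [hπ, hrC]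
    have he := hc.div hd hdne
    refine HasDerivAt.congr_deriv he ?_
    field_simp
  have h3 := (h2.hasFDerivAt).comp x h1
  refine HasFDerivAt.congr_fderiv (by simpa [Function.comp_def, Phi] using h3) ?_
  ext v
  simp only [phiD, ContinuousLinearMap.coe_comp', Function.comp_apply,
    ContinuousLinearMap.smul_apply, ContinuousLinearMap.smulRight_apply,
    ContinuousLinearMap.one_apply, Complex.ofRealCLM_apply, innerSL_apply_apply,
    smul_eq_mul, Complex.real_smul, Complex.ofReal_inv]
  simp only [ContinuousLinearMap.sub_apply, ContinuousLinearMap.coe_comp', Function.comp_apply,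
    ContinuousLinearMap.smulRight_apply, ContinuousLinearMap.one_apply, innerSL_apply_apply,
    Complex.real_smul, inner_sub_left, ContinuousLinearMap.toSpanSingleton_apply]
  push_cast
  ring

lemma aesm_phiD (k : ℝ) (x : EuclideanSpace ℝ (Fin 3)) (μ : Measure (EuclideanSpace ℝ (Fin 3))) :
    AEStronglyMeasurable (fun y => phiD k x y) μ := by
  have hc : Measurable fun y : EuclideanSpace ℝ (Fin 3) =>
      (Complex.exp (Complex.I * k * ‖x - y‖) * (Complex.I * k * ‖x - y‖ - 1) /
        (4 * Real.pi * ‖x - y‖ ^ 2) * (‖x - y‖ : ℂ)⁻¹) := by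
    have h1 : Continuous fun y : EuclideanSpace ℝ (Fin 3) =>
        Complex.exp (Complex.I * k * ‖x - y‖) * (Complex.I * k * ‖x - y‖ - 1) := by
      continuity
    have h2 : Continuous fun y : EuclideanSpace ℝ (Fin 3) =>
        ((4 : ℂ) * Real.pi * (‖x - y‖ : ℂ) ^ 2) := by continuity
    have h3 : Continuous fun y : EuclideanSpace ℝ (Fin 3) => ((‖x - y‖ : ℝ) : ℂ) := by continuity
    exact ((h1.measurable.div h2.measurable).mul h3.measurable.inv)
  have hL : Continuous fun y : EuclideanSpace ℝ (Fin 3) =>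
      Complex.ofRealCLM.comp (innerSL ℝ (x - y)) := by
    apply (ContinuousLinearMap.compL ℝ (EuclideanSpace ℝ (Fin 3)) ℝ ℂ
      Complex.ofRealCLM).continuous.comp
    exact (innerSL ℝ).continuous.comp (continuous_const.sub continuous_id)
  exact (hc.aestronglyMeasurable.smul hL.aestronglyMeasurable :)

/-- A single-layer potential with bounded measurable density on a compact set `K` of finite
two-dimensional Hausdorff measure decays like `1/‖x‖` at infinity and satisfies the
Sommerfeld radiation condition with wave number `k`. -/
theorem single_layer_potential_decay_and_radiation (k : ℝ)
    (K : Set (EuclideanSpace ℝ (Fin 3))) (hK : IsCompact K)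
    (hKfin : μH[2] K < ⊤)
    (φ : EuclideanSpace ℝ (Fin 3) → ℂ) (hφm : Measurable φ)
    (hφb : ∃ M : ℝ, ∀ y, ‖φ y‖ ≤ M)
    (u : EuclideanSpace ℝ (Fin 3) → ℂ)
    (hu : ∀ x, u x = ∫ y in K, Phi k x y * φ y ∂(μH[2])) :
    (∃ C : ℝ, 0 < C ∧ ∃ R : ℝ, 0 < R ∧ ∀ x : EuclideanSpace ℝ (Fin 3), R ≤ ‖x‖ →
        ‖u x‖ ≤ C / ‖x‖) ∧
      Tendsto
        (fun x : EuclideanSpace ℝ (Fin 3) =>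
          (‖x‖ : ℂ) * (fderiv ℝ u x ((‖x‖)⁻¹ • x) - Complex.I * k * u x))
        (cobounded (EuclideanSpace ℝ (Fin 3))) (nhds 0) := by
  classical
  obtain ⟨M, hM⟩ := hφb
  set M₀ : ℝ := max M 0 with hM₀def
  have hM₀ : ∀ y, ‖φ y‖ ≤ M₀ := fun y => by
    exact (hM y).trans (le_max_left _ _)
  have hM₀0 : 0 ≤ M₀ := le_max_right _ _
  obtain ⟨RK₀, hRK₀⟩ := hK.isBounded.subset_closedBall 0
  set RK : ℝ := max RK₀ 0 with hRKdef
  have hRK : 0 ≤ RK := le_max_right _ _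
  have hKball : ∀ y ∈ K, ‖y‖ ≤ RK := fun y hy => by
    have h := hRK₀ hy
    rw [Metric.mem_closedBall, dist_zero_right] at h
    exact h.trans (le_max_left _ _)
  haveI : IsFiniteMeasure ((μH[2] : Measure (EuclideanSpace ℝ (Fin 3))).restrict K) :=
    ⟨by rwa [Measure.restrict_apply_univ]⟩
  set μK : ℝ := ((μH[2] : Measure (EuclideanSpace ℝ (Fin 3))) K).toReal with hμKdef
  have hμK0 : 0 ≤ μK := ENNReal.toReal_nonneg
  have hsep : ∀ {x y : EuclideanSpace ℝ (Fin 3)}, y ∈ K → 2 * RK + 1 ≤ ‖x‖ →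
      RK + 1 ≤ ‖x - y‖ := by
    intro x y hy hx
    have h1 : ‖y‖ ≤ RK := hKball y hy
    have h2 := norm_sub_norm_le x y
    linarith
  have hπ := Real.pi_pos
  -- integrability of the basic integrand
  have hint : ∀ x : EuclideanSpace ℝ (Fin 3), 2 * RK + 1 ≤ ‖x‖ →
      Integrable (fun y => Phi k x y * φ y) (μH[2].restrict K) := by
    intro x hx
    refine Integrable.mono' (integrable_const (1 / (4 * Real.pi) * M₀))
      (meas_Phi_mul k x φ hφm).aestronglyMeasurable ?_
    refine ae_restrict_of_forall_mem hK.measurableSet ?_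
    intro y hy
    have h1 : RK + 1 ≤ ‖x - y‖ := hsep hy hx
    have hr : (1 : ℝ) ≤ ‖x - y‖ := by linarith
    rw [norm_mul, norm_Phi]
    have h2 : 1 / (4 * Real.pi * ‖x - y‖) ≤ 1 / (4 * Real.pi) := by
      apply one_div_le_one_div_of_le (by positivity)
      nlinarith
    exact mul_le_mul h2 (hM₀ y) (norm_nonneg _) (by positivity)
  -- integrability of the derivative integrand
  have hintD : ∀ x : EuclideanSpace ℝ (Fin 3), 2 * RK + 1 ≤ ‖x‖ →
      Integrable (fun y => φ y • phiD k x y) (μH[2].restrict K) := by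
    intro x hx
    refine Integrable.mono' (integrable_const (M₀ * ((|k| + 1) / (4 * Real.pi))))
      (hφm.aestronglyMeasurable.smul (aesm_phiD k x _)) ?_
    refine ae_restrict_of_forall_mem hK.measurableSet ?_
    intro y hy
    have h1 : RK + 1 ≤ ‖x - y‖ := hsep hy hx
    have hr : (1 : ℝ) ≤ ‖x - y‖ := by linarith
    have hrpos : (0 : ℝ) < ‖x - y‖ := by linarith
    have hne : x ≠ y := by
      intro h; rw [h, sub_self, norm_zero] at hrpos; exact lt_irrefl 0 hrpos
    refine le_trans (ContinuousLinearMap.opNorm_smul_le _ _) ?_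
    have h2 : (|k| * ‖x - y‖ + 1) / (4 * Real.pi * ‖x - y‖ ^ 2) ≤ (|k| + 1) / (4 * Real.pi) := by
      rw [div_le_div_iff₀ (by positivity) (by positivity)]
      have hq : |k| * ‖x - y‖ + 1 ≤ (|k| + 1) * ‖x - y‖ ^ 2 := by
        nlinarith [mul_nonneg (abs_nonneg k)
          (mul_nonneg (by linarith : (0:ℝ) ≤ ‖x - y‖ - 1) (by linarith : (0:ℝ) ≤ ‖x - y‖))]
      calc (|k| * ‖x - y‖ + 1) * (4 * Real.pi) ≤ ((|k| + 1) * ‖x - y‖ ^ 2) * (4 * Real.pi) :=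
            mul_le_mul_of_nonneg_right hq (by positivity)
        _ = (|k| + 1) * (4 * Real.pi * ‖x - y‖ ^ 2) := by ring
    exact mul_le_mul (hM₀ y) ((norm_phiD_le k hne).trans h2) (norm_nonneg _) hM₀0
  -- differentiation under the integral sign
  have hderiv : ∀ x₀ : EuclideanSpace ℝ (Fin 3), 2 * RK + 2 ≤ ‖x₀‖ →
      HasFDerivAt u (∫ y in K, φ y • phiD k x₀ y ∂(μH[2])) x₀ := by
    intro x₀ hx₀
    have hu' : u = fun x => ∫ y in K, Phi k x y * φ y ∂(μH[2]) := funext hu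
    rw [hu']
    have hball : ∀ x ∈ Metric.ball x₀ 1, 2 * RK + 1 ≤ ‖x‖ := by
      intro x hx
      rw [Metric.mem_ball, dist_eq_norm] at hx
      have := norm_sub_norm_le x x₀
      have h3 : ‖x₀‖ - ‖x‖ ≤ 1 := by
        have := norm_sub_norm_le x₀ x
        rw [← norm_neg (x - x₀), neg_sub] at hx
        linarith
      linarith
    refine hasFDerivAt_integral_of_dominated_of_fderiv_le
      (F' := fun x y => φ y • phiD k x y)
      (bound := fun _ => M₀ * ((|k| + 1) / (4 * Real.pi))) (Metric.ball_mem_nhds x₀ one_pos)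
      (Eventually.of_forall fun x => (meas_Phi_mul k x φ hφm).aestronglyMeasurable)
      (hint x₀ (by linarith)) (hφm.aestronglyMeasurable.smul (aesm_phiD k x₀ _)) ?_
      (integrable_const _) ?_
    · refine ae_restrict_of_forall_mem hK.measurableSet ?_
      intro y hy x hx
      have hxn := hball x hx
      have h1 : RK + 1 ≤ ‖x - y‖ := hsep hy hxn
      have hrpos : (0 : ℝ) < ‖x - y‖ := by linarith
      have hne : x ≠ y := by
        intro h; rw [h, sub_self, norm_zero] at hrpos; exact lt_irrefl 0 hrpos
      refine le_trans (ContinuousLinearMap.opNorm_smul_le _ _) ?_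
      have hr : (1 : ℝ) ≤ ‖x - y‖ := by linarith
      have h2 : (|k| * ‖x - y‖ + 1) / (4 * Real.pi * ‖x - y‖ ^ 2) ≤
          (|k| + 1) / (4 * Real.pi) := by
        rw [div_le_div_iff₀ (by positivity) (by positivity)]
        have hq : |k| * ‖x - y‖ + 1 ≤ (|k| + 1) * ‖x - y‖ ^ 2 := by
          nlinarith [mul_nonneg (abs_nonneg k)
            (mul_nonneg (by linarith : (0:ℝ) ≤ ‖x - y‖ - 1) (by linarith : (0:ℝ) ≤ ‖x - y‖))]
        calc (|k| * ‖x - y‖ + 1) * (4 * Real.pi) ≤ ((|k| + 1) * ‖x - y‖ ^ 2) * (4 * Real.pi) :=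
              mul_le_mul_of_nonneg_right hq (by positivity)
          _ = (|k| + 1) * (4 * Real.pi * ‖x - y‖ ^ 2) := by ring
      exact mul_le_mul (hM₀ y) ((norm_phiD_le k hne).trans h2) (norm_nonneg _) hM₀0
    · refine ae_restrict_of_forall_mem hK.measurableSet ?_
      intro y hy x hx
      have hxn := hball x hx
      have h1 : RK + 1 ≤ ‖x - y‖ := hsep hy hxn
      have hrpos : (0 : ℝ) < ‖x - y‖ := by linarith
      have hne : x ≠ y := by
        intro h; rw [h, sub_self, norm_zero] at hrpos; exact lt_irrefl 0 hrpos
      exact (hasFDerivAt_Phi k y hne).mul_const (φ y)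
  constructor
  · -- part (a)
    refine ⟨M₀ * μK / (2 * Real.pi) + 1, by positivity, 2 * RK + 2, by linarith, ?_⟩
    intro x hx
    have hxpos : 0 < ‖x‖ := by linarith
    rw [hu x]
    have hb : ∀ y ∈ K, ‖Phi k x y * φ y‖ ≤ M₀ / (2 * Real.pi * ‖x‖) := by
      intro y hy
      have hyR := hKball y hy
      have hrlb : ‖x‖ / 2 ≤ ‖x - y‖ := by
        have := norm_sub_norm_le x y; linarith
      have hrpos : 0 < ‖x - y‖ := by linarith
      rw [norm_mul, norm_Phi]
      have h2 : 1 / (4 * Real.pi * ‖x - y‖) ≤ 1 / (2 * Real.pi * ‖x‖) := by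
        apply one_div_le_one_div_of_le (by positivity)
        nlinarith
      refine le_trans (mul_le_mul h2 (hM₀ y) (norm_nonneg _) (by positivity))
        (le_of_eq (by ring))
    have h3 : _ ≤ M₀ / (2 * Real.pi * ‖x‖) * μK := norm_setIntegral_le_of_norm_le_const hKfin hb
    refine h3.trans ?_
    have he : M₀ / (2 * Real.pi * ‖x‖) * μK = (M₀ * μK / (2 * Real.pi)) / ‖x‖ := by
      field_simp
    rw [he]
    gcongr
    linarith

  · -- part (b)
    set C₃ : ℝ := M₀ * ((2 * |k| * RK + 1) / Real.pi) * μK with hC₃def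
    have hmain : ∀ x : EuclideanSpace ℝ (Fin 3), 2 * RK + 2 ≤ ‖x‖ →
        ‖(‖x‖ : ℂ) * (fderiv ℝ u x ((‖x‖)⁻¹ • x) - Complex.I * k * u x)‖ ≤ C₃ / ‖x‖ := by
      intro x hx
      have hxpos : 0 < ‖x‖ := by linarith
      have hD := (hderiv x hx).fderiv
      rw [hD, hu x]
      have hintD' := hintD x (by linarith)
      have hint' := hint x (by linarith)
      rw [ContinuousLinearMap.integral_apply hintD' ((‖x‖)⁻¹ • x)]
      have hA : Integrable (fun y => (φ y • phiD k x y) ((‖x‖)⁻¹ • x)) (μH[2].restrict K) :=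
        hintD'.apply_continuousLinearMap _
      have hB : Integrable (fun y => Complex.I * k * (Phi k x y * φ y)) (μH[2].restrict K) :=
        hint'.const_mul _
      rw [show Complex.I * k * (∫ y in K, Phi k x y * φ y ∂μH[2]) =
          ∫ y in K, Complex.I * k * (Phi k x y * φ y) ∂μH[2] from (integral_const_mul _ _).symm]
      rw [← integral_sub hA hB]
      have hbnd : ∀ y ∈ K, ‖(φ y • phiD k x y) ((‖x‖)⁻¹ • x) -
          Complex.I * k * (Phi k x y * φ y)‖ ≤
          M₀ * ((2 * |k| * RK + 1) / (Real.pi * ‖x‖ ^ 2)) := by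
        intro y hy
        have heq : (φ y • phiD k x y) ((‖x‖)⁻¹ • x) - Complex.I * k * (Phi k x y * φ y) =
            φ y * (phiD k x y ((‖x‖)⁻¹ • x) - Complex.I * k * Phi k x y) := by
          simp only [ContinuousLinearMap.smul_apply, smul_eq_mul]
          ring
        rw [heq, norm_mul]
        exact mul_le_mul (hM₀ y) (key_bound k RK (hKball y hy) hRK hx) (norm_nonneg _) hM₀0
      have h2 : _ ≤ M₀ * ((2 * |k| * RK + 1) / (Real.pi * ‖x‖ ^ 2)) * μK :=
        norm_setIntegral_le_of_norm_le_const hKfin hbnd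
      rw [norm_mul]
      have hxnorm : ‖((‖x‖ : ℝ) : ℂ)‖ = ‖x‖ := by
        rw [Complex.norm_real, norm_norm]
      rw [hxnorm]
      refine le_trans (mul_le_mul_of_nonneg_left h2 (norm_nonneg x)) (le_of_eq ?_)
      rw [hC₃def]
      field_simp
    have hg : Tendsto (fun x : EuclideanSpace ℝ (Fin 3) => C₃ / ‖x‖)
        (cobounded (EuclideanSpace ℝ (Fin 3))) (nhds 0) :=
      (tendsto_const_nhds (x := C₃)).div_atTop tendsto_norm_cobounded_atTop
    refine squeeze_zero_norm' ?_ hg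
    exact (tendsto_norm_cobounded_atTop.eventually_ge_atTop (2 * RK + 2)).mono
      fun x hx => hmain x hx
end

section
/- Let K ⊆ ℝ³ be a compact set for which there exists a constant C₀ > 0 such that μH²(K ∩ closedBall(x, r)) ≤ C₀·r² for all x ∈ ℝ³ and all r > 0, and let φ : ℝ³ → ℂ be a bounded measurable function. Define w(x) = ∫_{y ∈ K} φ(y)/(4π·‖x − y‖) dμH²(y). Then for every x ∈ ℝ³ the integrand is integrable (so w is well defined on all of ℝ³, including on K), w is continuous on all of ℝ³, and w(x) → 0 as ‖x‖ → ∞. -/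
open Complex MeasureTheory Metric Filter Bornology
open scoped ENNReal

open Set in
private lemma key_bound_s7 {K : Set (EuclideanSpace ℝ (Fin 3))} {C₀ : ℝ} (hC₀ : 0 < C₀)
    (hreg : ∀ (x : EuclideanSpace ℝ (Fin 3)) (r : ℝ), 0 < r →
      μH[2] (K ∩ closedBall x r) ≤ ENNReal.ofReal (C₀ * r ^ 2))
    (x : EuclideanSpace ℝ (Fin 3)) {r : ℝ} (hr : 0 < r) :
    ∫⁻ y in K ∩ closedBall x r, ENNReal.ofReal (‖x - y‖⁻¹) ∂μH[2]
      ≤ ENNReal.ofReal (2 * C₀ * r) := by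
  set μ := (μH[2] : Measure (EuclideanSpace ℝ (Fin 3))).restrict (K ∩ closedBall x r) with hμ
  have hf : Measurable fun y : EuclideanSpace ℝ (Fin 3) => ‖x - y‖⁻¹ :=
    ((measurable_const.sub measurable_id).norm).inv
  rw [lintegral_eq_lintegral_meas_lt μ
    (Filter.Eventually.of_forall fun y => inv_nonneg.2 (norm_nonneg _)) hf.aemeasurable]
  have hmeas : ∀ t : ℝ, 0 < t →
      μ {a | t < ‖x - a‖⁻¹} ≤ ENNReal.ofReal (C₀ * (min r t⁻¹) ^ 2) := by
    intro t ht
    have hS : MeasurableSet {a : EuclideanSpace ℝ (Fin 3) | t < ‖x - a‖⁻¹} :=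
      measurableSet_lt measurable_const hf
    rw [hμ, Measure.restrict_apply hS]
    refine le_trans (measure_mono ?_) (hreg x (min r t⁻¹) (lt_min hr (inv_pos.2 ht)))
    rintro a ⟨ha, haK, har⟩
    simp only [mem_setOf_eq] at ha
    have hpos : 0 < ‖x - a‖ := by
      by_contra h
      push_neg at h
      have h0 : ‖x - a‖ = 0 := le_antisymm h (norm_nonneg _)
      rw [h0] at ha
      simp at ha
      linarith
    have h1 : ‖x - a‖ ≤ t⁻¹ := by
      have h2 := (inv_lt_inv₀ (inv_pos.2 hpos) ht).mpr ha
      rw [inv_inv] at h2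
      exact h2.le
    have hd : dist a x = ‖x - a‖ := by rw [dist_eq_norm, norm_sub_rev]
    rw [mem_closedBall] at har
    refine ⟨haK, ?_⟩
    rw [mem_closedBall, le_min_iff]
    exact ⟨har, hd ▸ h1⟩
  have hC0r2 : (0:ℝ) ≤ C₀ * r ^ 2 := mul_nonneg hC₀.le (sq_nonneg r)
  have hC0r : (0:ℝ) ≤ C₀ * r := mul_nonneg hC₀.le hr.le
  have hsplit : Ioc (0:ℝ) r⁻¹ ∪ Ioi r⁻¹ = Ioi (0:ℝ) := Ioc_union_Ioi_eq_Ioi (inv_pos.2 hr).le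
  have hrpow : ∀ t : ℝ, 0 < t → C₀ * t ^ (-2:ℝ) = C₀ * (t⁻¹) ^ 2 := by
    intro t ht
    have h2 : t ^ (-2:ℝ) = (t ^ (2:ℕ))⁻¹ := by
      rw [← Real.rpow_natCast t 2, ← Real.rpow_neg ht.le]
      norm_num
    rw [h2, ← inv_pow]
  calc ∫⁻ t in Ioi (0:ℝ), μ {a | t < ‖x - a‖⁻¹}
      = (∫⁻ t in Ioc (0:ℝ) r⁻¹, μ {a | t < ‖x - a‖⁻¹}) +
        ∫⁻ t in Ioi r⁻¹, μ {a | t < ‖x - a‖⁻¹} := by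
        rw [← lintegral_union measurableSet_Ioi (Ioc_disjoint_Ioi le_rfl), hsplit]
    _ ≤ ENNReal.ofReal (C₀ * r) + ENNReal.ofReal (C₀ * r) := by
        gcongr
        · calc ∫⁻ t in Ioc (0:ℝ) r⁻¹, μ {a | t < ‖x - a‖⁻¹}
              ≤ ∫⁻ _ in Ioc (0:ℝ) r⁻¹, ENNReal.ofReal (C₀ * r ^ 2) := by
                refine setLIntegral_mono' measurableSet_Ioc fun t ht => ?_
                refine (hmeas t ht.1).trans (ENNReal.ofReal_le_ofReal
                  (mul_le_mul_of_nonneg_left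
                    (pow_le_pow_left₀ (le_min hr.le (inv_pos.2 ht.1).le) (min_le_left _ _) 2)
                    hC₀.le))
            _ = ENNReal.ofReal (C₀ * r ^ 2) * volume (Ioc (0:ℝ) r⁻¹) := setLIntegral_const _ _
            _ ≤ ENNReal.ofReal (C₀ * r) := by
                rw [Real.volume_Ioc, ← ENNReal.ofReal_mul hC0r2]
                refine ENNReal.ofReal_le_ofReal (le_of_eq ?_)
                field_simp
                ring
        · calc ∫⁻ t in Ioi r⁻¹, μ {a | t < ‖x - a‖⁻¹}
              ≤ ∫⁻ t in Ioi r⁻¹, ENNReal.ofReal (C₀ * (t⁻¹) ^ 2) := by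
                refine setLIntegral_mono' measurableSet_Ioi fun t ht => ?_
                have ht0 : (0:ℝ) < t := lt_trans (inv_pos.2 hr) ht
                refine (hmeas t ht0).trans (ENNReal.ofReal_le_ofReal
                  (mul_le_mul_of_nonneg_left
                    (pow_le_pow_left₀ (le_min hr.le (inv_pos.2 ht0).le) (min_le_right _ _) 2)
                    hC₀.le))
            _ = ENNReal.ofReal (C₀ * r) := by
                have hbase : IntegrableOn (fun t : ℝ => C₀ * t ^ (-2:ℝ)) (Ioi r⁻¹) volume :=
                  (integrableOn_Ioi_rpow_of_lt (show (-2:ℝ) < -1 by norm_num)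
                    (inv_pos.2 hr)).const_mul C₀
                have hint : IntegrableOn (fun t : ℝ => C₀ * (t⁻¹) ^ 2) (Ioi r⁻¹) volume :=
                  IntegrableOn.congr_fun hbase
                    (fun t ht => hrpow t (lt_trans (inv_pos.2 hr) ht)) measurableSet_Ioi
                rw [← ofReal_integral_eq_lintegral_ofReal hint
                    (Filter.Eventually.of_forall fun t => by positivity)]
                congr 1
                have heq : ∫ t in Ioi r⁻¹, C₀ * (t⁻¹) ^ 2 = C₀ * ∫ t in Ioi r⁻¹, t ^ (-2:ℝ) := by
                  rw [← integral_const_mul]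
                  exact setIntegral_congr_fun measurableSet_Ioi
                    fun t ht => (hrpow t (lt_trans (inv_pos.2 hr) ht)).symm
                rw [heq, integral_Ioi_rpow_of_lt (by norm_num) (inv_pos.2 hr)]
                norm_num [Real.rpow_neg_one]
    _ = ENNReal.ofReal (2 * C₀ * r) := by
        rw [← ENNReal.ofReal_add hC0r hC0r]
        ring_nf



/-- A Laplace single-layer potential with bounded measurable density on a compact set `K`
satisfying the upper Ahlfors regularity condition `μH²(K ∩ B̄(x,r)) ≤ C₀ r²` is well defined
everywhere (including on `K`), continuous on all of `ℝ³`, and vanishes at infinity. -/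
theorem laplace_single_layer_potential_continuous (K : Set (EuclideanSpace ℝ (Fin 3)))
    (hK : IsCompact K) (C₀ : ℝ) (hC₀ : 0 < C₀)
    (hreg : ∀ (x : EuclideanSpace ℝ (Fin 3)) (r : ℝ), 0 < r →
      μH[2] (K ∩ closedBall x r) ≤ ENNReal.ofReal (C₀ * r ^ 2))
    (φ : EuclideanSpace ℝ (Fin 3) → ℂ) (hφm : Measurable φ)
    (hφb : ∃ M : ℝ, ∀ y, ‖φ y‖ ≤ M)
    (w : EuclideanSpace ℝ (Fin 3) → ℂ)
    (hw : ∀ x, w x = ∫ y in K, φ y / (4 * Real.pi * ‖x - y‖) ∂(μH[2])) :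
    (∀ x : EuclideanSpace ℝ (Fin 3),
        IntegrableOn (fun y => φ y / (4 * Real.pi * ‖x - y‖)) K μH[2]) ∧
      Continuous w ∧
      Tendsto w (cobounded (EuclideanSpace ℝ (Fin 3))) (nhds 0) := by
  obtain ⟨M₀, hM₀⟩ := hφb
  set M : ℝ := max M₀ 0 with hMdef
  have hM : ∀ y, ‖φ y‖ ≤ M := fun y =>
    le_trans (hM₀ y) (le_max_left _ _)
  have hM0 : (0:ℝ) ≤ M := le_max_right _ _
  have hπ : (0:ℝ) < Real.pi := Real.pi_pos
  set c : ℝ := M * (4 * Real.pi)⁻¹ with hcdef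
  have hc0 : (0:ℝ) ≤ c := by positivity
  -- rewrite the integrand through a real-valued kernel
  have hfeq : ∀ x y : EuclideanSpace ℝ (Fin 3),
      φ y / (4 * Real.pi * ‖x - y‖) = φ y * (((4 * Real.pi * ‖x - y‖)⁻¹ : ℝ) : ℂ) := by
    intro x y
    rw [Complex.ofReal_inv, div_eq_mul_inv]
    push_cast
    ring
  have hnorm : ∀ x y : EuclideanSpace ℝ (Fin 3),
      ‖φ y / (4 * Real.pi * ‖x - y‖ : ℂ)‖ = ‖φ y‖ * (4 * Real.pi * ‖x - y‖)⁻¹ := by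
    intro x y
    rw [hfeq x y, norm_mul, Complex.norm_real, Real.norm_eq_abs]
    congr 1
    exact _root_.abs_of_nonneg (by positivity)
  -- measurability of the integrand
  have hnm : ∀ x : EuclideanSpace ℝ (Fin 3),
      Measurable fun y : EuclideanSpace ℝ (Fin 3) => ‖x - y‖ := fun x =>
    (measurable_const.sub measurable_id).norm
  have hfm : ∀ x : EuclideanSpace ℝ (Fin 3),
      Measurable fun y => φ y / (4 * Real.pi * ‖x - y‖ : ℂ) := by
    intro x
    exact hφm.div (measurable_const.mul (Complex.measurable_ofReal.comp (hnm x)))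
  -- pointwise domination
  have hbnd : ∀ x y : EuclideanSpace ℝ (Fin 3),
      ENNReal.ofReal ‖φ y / (4 * Real.pi * ‖x - y‖ : ℂ)‖ ≤
        ENNReal.ofReal c * ENNReal.ofReal (‖x - y‖⁻¹) := by
    intro x y
    rw [← ENNReal.ofReal_mul hc0]
    refine ENNReal.ofReal_le_ofReal ?_
    rw [hnorm x y, mul_inv]
    calc ‖φ y‖ * ((4 * Real.pi)⁻¹ * ‖x - y‖⁻¹)
        ≤ M * ((4 * Real.pi)⁻¹ * ‖x - y‖⁻¹) :=
          mul_le_mul_of_nonneg_right (hM y) (by positivity)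
      _ = c * ‖x - y‖⁻¹ := by rw [hcdef]; ring
  -- the main lintegral estimate on balls
  have hlintball : ∀ (x : EuclideanSpace ℝ (Fin 3)) {r : ℝ}, 0 < r →
      ∫⁻ y in K ∩ closedBall x r, ENNReal.ofReal ‖φ y / (4 * Real.pi * ‖x - y‖ : ℂ)‖ ∂μH[2]
        ≤ ENNReal.ofReal (c * (2 * C₀ * r)) := by
    intro x r hr
    calc ∫⁻ y in K ∩ closedBall x r, ENNReal.ofReal ‖φ y / (4 * Real.pi * ‖x - y‖ : ℂ)‖ ∂μH[2]
        ≤ ∫⁻ y in K ∩ closedBall x r,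
            ENNReal.ofReal c * ENNReal.ofReal (‖x - y‖⁻¹) ∂μH[2] :=
          lintegral_mono fun y => hbnd x y
      _ = ENNReal.ofReal c *
            ∫⁻ y in K ∩ closedBall x r, ENNReal.ofReal (‖x - y‖⁻¹) ∂μH[2] :=
          lintegral_const_mul' _ _ ENNReal.ofReal_ne_top
      _ ≤ ENNReal.ofReal c * ENNReal.ofReal (2 * C₀ * r) :=
          mul_le_mul_right (key_bound_s7 hC₀ hreg x hr) _
      _ = ENNReal.ofReal (c * (2 * C₀ * r)) :=
          (ENNReal.ofReal_mul hc0).symm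
  -- global radius and finiteness of the measure of K
  obtain ⟨R₀, hKR₀⟩ := hK.isBounded.subset_closedBall 0
  set R : ℝ := max R₀ 1 with hRdef
  have hR : (0:ℝ) < R := lt_of_lt_of_le one_pos (le_max_right _ _)
  have hKR : K ⊆ closedBall 0 R :=
    hKR₀.trans (closedBall_subset_closedBall (le_max_left _ _))
  have hμK : μH[2] K ≤ ENNReal.ofReal (C₀ * R ^ 2) :=
    le_trans (measure_mono (Set.subset_inter Set.Subset.rfl hKR)) (hreg 0 R hR)
  -- integrability
  have hInt : ∀ x : EuclideanSpace ℝ (Fin 3),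
      IntegrableOn (fun y => φ y / (4 * Real.pi * ‖x - y‖)) K μH[2] := by
    intro x
    obtain ⟨r₀, hr₀⟩ := hK.isBounded.subset_closedBall x
    have hr : (0:ℝ) < max r₀ 1 := lt_of_lt_of_le one_pos (le_max_right _ _)
    have hKr : K ⊆ closedBall x (max r₀ 1) :=
      hr₀.trans (closedBall_subset_closedBall (le_max_left _ _))
    refine ⟨(hfm x).aestronglyMeasurable, ?_⟩
    rw [hasFiniteIntegral_iff_norm]
    have h1 := hlintball x hr
    rw [Set.inter_eq_self_of_subset_left hKr] at h1
    exact lt_of_le_of_lt h1 ENNReal.ofReal_lt_top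
  refine ⟨hInt, ?_, ?_⟩
  · -- continuity
    rw [continuous_iff_continuousAt]
    intro x₀
    rw [Metric.continuousAt_iff]
    intro ε hε
    have haux : ∀ a : ℝ, 0 ≤ a → a * (ε / (4 * (a + 1))) ≤ ε / 4 := by
      intro a ha
      rw [← mul_div_assoc, div_le_div_iff₀ (by positivity) (by norm_num)]
      nlinarith [hε.le]
    set c₂ : ℝ := 10 * c * C₀ with hc₂def
    have hc₂0 : (0:ℝ) ≤ c₂ := by positivity
    set r : ℝ := ε / (4 * (c₂ + 1)) with hrdef
    have hr : (0:ℝ) < r := by positivity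
    set c₃ : ℝ := c * (C₀ * R ^ 2) / (2 * r ^ 2) with hc₃def
    have hc₃0 : (0:ℝ) ≤ c₃ := by positivity
    set δ : ℝ := min r (ε / (4 * (c₃ + 1))) with hδdef
    have hδ : (0:ℝ) < δ := lt_min hr (by positivity)
    refine ⟨δ, hδ, fun x hx => ?_⟩
    set S : Set (EuclideanSpace ℝ (Fin 3)) := closedBall x₀ (2 * r) with hSdef
    have hd_r : dist x x₀ < r := lt_of_lt_of_le hx (min_le_left _ _)
    have hd2 : dist x x₀ < ε / (4 * (c₃ + 1)) := lt_of_lt_of_le hx (min_le_right _ _)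
    set d : ℝ := dist x x₀ with hddef
    have hd0 : (0:ℝ) ≤ d := dist_nonneg
    -- near-part estimate
    have hnear : ∫⁻ y in K ∩ S,
        ENNReal.ofReal ‖(φ y / (4 * Real.pi * ‖x - y‖ : ℂ)) -
          φ y / (4 * Real.pi * ‖x₀ - y‖ : ℂ)‖ ∂μH[2] ≤ ENNReal.ofReal (ε / 4) := by
      calc ∫⁻ y in K ∩ S, ENNReal.ofReal ‖(φ y / (4 * Real.pi * ‖x - y‖ : ℂ)) -
              φ y / (4 * Real.pi * ‖x₀ - y‖ : ℂ)‖ ∂μH[2]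
          ≤ ∫⁻ y in K ∩ S,
              (ENNReal.ofReal ‖φ y / (4 * Real.pi * ‖x - y‖ : ℂ)‖ +
               ENNReal.ofReal ‖φ y / (4 * Real.pi * ‖x₀ - y‖ : ℂ)‖) ∂μH[2] := by
            refine lintegral_mono fun y => ?_
            rw [← ENNReal.ofReal_add (norm_nonneg _) (norm_nonneg _)]
            exact ENNReal.ofReal_le_ofReal (norm_sub_le _ _)
        _ = (∫⁻ y in K ∩ S, ENNReal.ofReal ‖φ y / (4 * Real.pi * ‖x - y‖ : ℂ)‖ ∂μH[2]) +
            ∫⁻ y in K ∩ S, ENNReal.ofReal ‖φ y / (4 * Real.pi * ‖x₀ - y‖ : ℂ)‖ ∂μH[2] :=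
            lintegral_add_left ((hfm x).norm.ennreal_ofReal) _
        _ ≤ ENNReal.ofReal (c * (2 * C₀ * (3 * r))) + ENNReal.ofReal (c * (2 * C₀ * (2 * r))) := by
            gcongr
            · refine le_trans (lintegral_mono_set ?_) (hlintball x (by positivity))
              rintro y ⟨hyK, hyS⟩
              refine ⟨hyK, ?_⟩
              rw [mem_closedBall] at hyS ⊢
              calc dist y x ≤ dist y x₀ + dist x₀ x := dist_triangle _ _ _
                _ ≤ 2 * r + r := add_le_add hyS (by rw [dist_comm]; exact hd_r.le)
                _ = 3 * r := by ring
            · exact hlintball x₀ (by positivity)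
        _ ≤ ENNReal.ofReal (ε / 4) := by
            rw [← ENNReal.ofReal_add (by positivity) (by positivity)]
            refine ENNReal.ofReal_le_ofReal ?_
            have : c * (2 * C₀ * (3 * r)) + c * (2 * C₀ * (2 * r)) = c₂ * r := by
              rw [hc₂def]; ring
            rw [this, hrdef]
            exact haux c₂ hc₂0
    -- far-part estimate
    have hfar : ∫⁻ y in K \ S,
        ENNReal.ofReal ‖(φ y / (4 * Real.pi * ‖x - y‖ : ℂ)) -
          φ y / (4 * Real.pi * ‖x₀ - y‖ : ℂ)‖ ∂μH[2] ≤ ENNReal.ofReal (ε / 4) := by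
      have hpt : ∀ y ∈ K \ S,
          ENNReal.ofReal ‖(φ y / (4 * Real.pi * ‖x - y‖ : ℂ)) -
            φ y / (4 * Real.pi * ‖x₀ - y‖ : ℂ)‖ ≤
          ENNReal.ofReal (c * (d / (2 * r ^ 2))) := by
        rintro y ⟨hyK, hyS⟩
        refine ENNReal.ofReal_le_ofReal ?_
        have hb : 2 * r < ‖x₀ - y‖ := by
          rw [hSdef, mem_closedBall, not_le] at hyS
          rwa [dist_comm, dist_eq_norm] at hyS
        have ha : r ≤ ‖x - y‖ := by
          have h1 : ‖x₀ - y‖ - ‖x - y‖ ≤ ‖x₀ - x‖ := by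
            have := norm_sub_norm_le (x₀ - y) (x - y)
            have he : (x₀ - y) - (x - y) = x₀ - x := by abel
            rwa [he] at this
          have h2 : ‖x₀ - x‖ = d := by rw [hddef, dist_eq_norm, norm_sub_rev]
          linarith [hd_r]
        have ha0 : (0:ℝ) < ‖x - y‖ := lt_of_lt_of_le hr ha
        have hb0 : (0:ℝ) < ‖x₀ - y‖ := lt_trans (by positivity) hb
        rw [hfeq x y, hfeq x₀ y, ← mul_sub, ← Complex.ofReal_sub, norm_mul,
          Complex.norm_real, Real.norm_eq_abs]
        have hker : |(4 * Real.pi * ‖x - y‖)⁻¹ - (4 * Real.pi * ‖x₀ - y‖)⁻¹| ≤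
            (4 * Real.pi)⁻¹ * (d / (2 * r ^ 2)) := by
          have hsplit : (4 * Real.pi * ‖x - y‖)⁻¹ - (4 * Real.pi * ‖x₀ - y‖)⁻¹ =
              (4 * Real.pi)⁻¹ * (‖x - y‖⁻¹ - ‖x₀ - y‖⁻¹) := by
            field_simp
            try ring
          rw [hsplit, abs_mul, _root_.abs_of_nonneg (by positivity : (0:ℝ) ≤ (4 * Real.pi)⁻¹)]
          refine mul_le_mul_of_nonneg_left ?_ (by positivity)
          have hdiff : ‖x - y‖⁻¹ - ‖x₀ - y‖⁻¹ = (‖x₀ - y‖ - ‖x - y‖) / (‖x - y‖ * ‖x₀ - y‖) := by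
            field_simp
            try ring
          rw [hdiff, abs_div, abs_of_pos (mul_pos ha0 hb0)]
          have hnum : |‖x₀ - y‖ - ‖x - y‖| ≤ d := by
            have := abs_norm_sub_norm_le (x₀ - y) (x - y)
            have he : (x₀ - y) - (x - y) = x₀ - x := by abel
            rw [he] at this
            have h2 : ‖x₀ - x‖ = d := by rw [hddef, dist_eq_norm, norm_sub_rev]
            linarith
          refine div_le_div₀ hd0 hnum (by positivity) ?_
          calc 2 * r ^ 2 = r * (2 * r) := by ring
            _ ≤ ‖x - y‖ * ‖x₀ - y‖ := mul_le_mul ha hb.le (by positivity) ha0.le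
        calc ‖φ y‖ * |(4 * Real.pi * ‖x - y‖)⁻¹ - (4 * Real.pi * ‖x₀ - y‖)⁻¹|
            ≤ M * ((4 * Real.pi)⁻¹ * (d / (2 * r ^ 2))) :=
              mul_le_mul (hM y) hker (abs_nonneg _) hM0
          _ = c * (d / (2 * r ^ 2)) := by rw [hcdef]; ring
      calc ∫⁻ y in K \ S, ENNReal.ofReal ‖(φ y / (4 * Real.pi * ‖x - y‖ : ℂ)) -
              φ y / (4 * Real.pi * ‖x₀ - y‖ : ℂ)‖ ∂μH[2]
          ≤ ∫⁻ _ in K \ S, ENNReal.ofReal (c * (d / (2 * r ^ 2))) ∂μH[2] :=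
            setLIntegral_mono' (hK.measurableSet.diff measurableSet_closedBall) hpt
        _ = ENNReal.ofReal (c * (d / (2 * r ^ 2))) * μH[2] (K \ S) := setLIntegral_const _ _
        _ ≤ ENNReal.ofReal (c * (d / (2 * r ^ 2))) * ENNReal.ofReal (C₀ * R ^ 2) := by
            exact mul_le_mul_right (le_trans (measure_mono Set.diff_subset) hμK) _
        _ ≤ ENNReal.ofReal (ε / 4) := by
            rw [← ENNReal.ofReal_mul (by positivity)]
            refine ENNReal.ofReal_le_ofReal ?_
            have heq : c * (d / (2 * r ^ 2)) * (C₀ * R ^ 2) = c₃ * d := by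
              rw [hc₃def]; field_simp
            rw [heq]
            have hdle : d ≤ ε / (4 * (c₃ + 1)) := hd2.le
            calc c₃ * d ≤ c₃ * (ε / (4 * (c₃ + 1))) := mul_le_mul_of_nonneg_left hdle hc₃0
              _ ≤ ε / 4 := haux c₃ hc₃0
    -- combine
    rw [dist_eq_norm, hw x, hw x₀, ← integral_sub (hInt x) (hInt x₀)]
    have hsplit : ∫⁻ y in K,
        ENNReal.ofReal ‖(φ y / (4 * Real.pi * ‖x - y‖ : ℂ)) -
          φ y / (4 * Real.pi * ‖x₀ - y‖ : ℂ)‖ ∂μH[2] ≤ ENNReal.ofReal (ε / 2) := by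
      have hKsplit : K = (K ∩ S) ∪ (K \ S) := (Set.inter_union_diff K S).symm
      calc ∫⁻ y in K, ENNReal.ofReal ‖(φ y / (4 * Real.pi * ‖x - y‖ : ℂ)) -
              φ y / (4 * Real.pi * ‖x₀ - y‖ : ℂ)‖ ∂μH[2]
          = (∫⁻ y in K ∩ S, ENNReal.ofReal ‖(φ y / (4 * Real.pi * ‖x - y‖ : ℂ)) -
              φ y / (4 * Real.pi * ‖x₀ - y‖ : ℂ)‖ ∂μH[2]) +
            ∫⁻ y in K \ S, ENNReal.ofReal ‖(φ y / (4 * Real.pi * ‖x - y‖ : ℂ)) -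
              φ y / (4 * Real.pi * ‖x₀ - y‖ : ℂ)‖ ∂μH[2] := by
            rw [← lintegral_union (hK.measurableSet.diff measurableSet_closedBall)
              (Set.disjoint_sdiff_right.mono_left Set.inter_subset_right), ← hKsplit]
        _ ≤ ENNReal.ofReal (ε / 4) + ENNReal.ofReal (ε / 4) := add_le_add hnear hfar
        _ = ENNReal.ofReal (ε / 2) := by
            rw [← ENNReal.ofReal_add (by positivity) (by positivity)]
            congr 1
            ring
    calc ‖∫ y in K, ((φ y / (4 * Real.pi * ‖x - y‖ : ℂ)) -
            φ y / (4 * Real.pi * ‖x₀ - y‖ : ℂ)) ∂μH[2]‖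
        ≤ (∫⁻ y in K, ENNReal.ofReal ‖(φ y / (4 * Real.pi * ‖x - y‖ : ℂ)) -
            φ y / (4 * Real.pi * ‖x₀ - y‖ : ℂ)‖ ∂μH[2]).toReal :=
          norm_integral_le_lintegral_norm _
      _ ≤ ε / 2 := ENNReal.toReal_le_of_le_ofReal (by positivity) hsplit
      _ < ε := by linarith
  · -- vanishing at infinity
    rw [show (0:ℂ) = 0 from rfl]
    refine tendsto_zero_iff_norm_tendsto_zero.mpr ?_
    have hbound : ∀ x : EuclideanSpace ℝ (Fin 3), R + 1 ≤ ‖x‖ →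
        ‖w x‖ ≤ c * (C₀ * R ^ 2) / (‖x‖ - R) := by
      intro x hx
      have hxR : (0:ℝ) < ‖x‖ - R := by linarith
      have hpt : ∀ y ∈ K,
          ENNReal.ofReal ‖φ y / (4 * Real.pi * ‖x - y‖ : ℂ)‖ ≤
            ENNReal.ofReal (c * (‖x‖ - R)⁻¹) := by
        intro y hy
        refine ENNReal.ofReal_le_ofReal ?_
        have hyR : ‖y‖ ≤ R := by
          have := hKR hy
          rwa [mem_closedBall, dist_zero_right] at this
        have hxy : ‖x‖ - R ≤ ‖x - y‖ := by
          have := norm_sub_norm_le x y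
          linarith [this]
        have hxy0 : (0:ℝ) < ‖x - y‖ := lt_of_lt_of_le hxR hxy
        rw [hnorm x y, mul_inv]
        calc ‖φ y‖ * ((4 * Real.pi)⁻¹ * ‖x - y‖⁻¹)
            ≤ M * ((4 * Real.pi)⁻¹ * (‖x‖ - R)⁻¹) := by
              refine mul_le_mul (hM y) ?_ (by positivity) hM0
              refine mul_le_mul_of_nonneg_left ?_ (by positivity)
              exact inv_anti₀ hxR hxy
          _ = c * (‖x‖ - R)⁻¹ := by rw [hcdef]; ring
      rw [hw x]
      calc ‖∫ y in K, φ y / (4 * Real.pi * ‖x - y‖) ∂μH[2]‖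
          ≤ (∫⁻ y in K, ENNReal.ofReal ‖φ y / (4 * Real.pi * ‖x - y‖ : ℂ)‖ ∂μH[2]).toReal :=
            norm_integral_le_lintegral_norm _
        _ ≤ c * (C₀ * R ^ 2) / (‖x‖ - R) := by
            refine ENNReal.toReal_le_of_le_ofReal (by positivity) ?_
            calc ∫⁻ y in K, ENNReal.ofReal ‖φ y / (4 * Real.pi * ‖x - y‖ : ℂ)‖ ∂μH[2]
                ≤ ∫⁻ _ in K, ENNReal.ofReal (c * (‖x‖ - R)⁻¹) ∂μH[2] :=
                  setLIntegral_mono' hK.measurableSet hpt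
              _ = ENNReal.ofReal (c * (‖x‖ - R)⁻¹) * μH[2] K := setLIntegral_const _ _
              _ ≤ ENNReal.ofReal (c * (‖x‖ - R)⁻¹) * ENNReal.ofReal (C₀ * R ^ 2) :=
                  mul_le_mul_right hμK _
              _ ≤ ENNReal.ofReal (c * (C₀ * R ^ 2) / (‖x‖ - R)) := by
                  rw [← ENNReal.ofReal_mul (by positivity)]
                  refine ENNReal.ofReal_le_ofReal (le_of_eq ?_)
                  field_simp
                  try ring
    have hev : ∀ᶠ x : EuclideanSpace ℝ (Fin 3) in cobounded _, R + 1 ≤ ‖x‖ :=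
      tendsto_norm_cobounded_atTop.eventually_ge_atTop (R + 1)
    refine squeeze_zero' (Filter.Eventually.of_forall fun x => norm_nonneg _)
      (hev.mono fun x hx => hbound x hx) ?_
    have hden : Tendsto (fun x : EuclideanSpace ℝ (Fin 3) => ‖x‖ - R)
        (cobounded _) atTop := tendsto_atTop_add_const_right _ (-R)
          tendsto_norm_cobounded_atTop |>.congr (fun x => by ring)
    exact Filter.Tendsto.div_atTop tendsto_const_nhds hden
end
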